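/- The space (𝒟, d_𝒟) is a complete metric space, where 𝒟 is the set of pairs f = {f⁻, f⁺} with f⁺ right-continuous nondecreasing on ℝ, f⁺ - id 2π-periodic, f⁻ the left-continuous modification of f⁺, and d_𝒟(f,g) = inf{ε ≥ 0 : f⁺(x) ≤ g⁺(x+ε)+ε and g⁺(x) ≤ f⁺(x+ε)+ε for all x ∈ ℝ}. -/

import Mathlib

open Filter

/-- An element of the space `𝒟`: a right-continuous nondecreasing function `f⁺` on `ℝ`
with `f⁺ - id` periodic of period `2π`.  (The left-continuous modification `f⁻` is
determined by `f⁺` and is omitted.) -/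
structure CircD where
  toFun : ℝ → ℝ
  mono : Monotone toFun
  right_cont : ∀ x : ℝ, ContinuousWithinAt toFun (Set.Ici x) x
  periodic : ∀ x : ℝ, toFun (x + 2 * Real.pi) = toFun x + 2 * Real.pi

/-- The metric `d_𝒟` on `𝒟`. -/
noncomputable def dD (f g : CircD) : ℝ :=
  sInf {ε : ℝ | 0 ≤ ε ∧ ∀ x : ℝ,
    f.toFun x ≤ g.toFun (x + ε) + ε ∧ g.toFun x ≤ f.toFun (x + ε) + ε}

def Sset (f g : CircD) : Set ℝ :=
  {ε : ℝ | 0 ≤ ε ∧ ∀ x : ℝ,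
    f.toFun x ≤ g.toFun (x + ε) + ε ∧ g.toFun x ≤ f.toFun (x + ε) + ε}

lemma dD_eq (f g : CircD) : dD f g = sInf (Sset f g) := rfl

lemma CircD.ext' {f g : CircD} (h : f.toFun = g.toFun) : f = g := by
  cases f; cases g; simpa using h

lemma periodic_int (f : CircD) (k : ℤ) (x : ℝ) :
    f.toFun (x + 2 * Real.pi * k) = f.toFun x + 2 * Real.pi * k := by
  induction k using Int.induction_on with
  | zero => simp
  | succ n ih =>
    have h := f.periodic (x + 2 * Real.pi * n)
    push_cast at ih ⊢
    rw [show x + 2*Real.pi*((n:ℝ)+1) = (x + 2*Real.pi*(n:ℝ)) + 2*Real.pi by ring, h, ih]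
    ring
  | pred n ih =>
    have h := f.periodic (x + 2 * Real.pi * (-(n:ℝ)-1))
    push_cast at ih ⊢
    rw [show x + 2*Real.pi*(-(n:ℝ)-1) + 2*Real.pi = x + 2*Real.pi*(-(n:ℝ)) by ring] at h
    linarith

lemma diff_bound (f g : CircD) (x : ℝ) :
    f.toFun x - g.toFun x ≤ f.toFun 0 - g.toFun 0 + 2 * Real.pi := by
  have hπ : 0 < 2 * Real.pi := by positivity
  set k : ℤ := ⌊x / (2 * Real.pi)⌋ with hk
  set r : ℝ := x - 2 * Real.pi * k with hr
  have h1 : (k:ℝ) * (2 * Real.pi) ≤ x := (le_div_iff₀ hπ).1 (Int.floor_le _)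
  have h2 : x < ((k:ℝ) + 1) * (2 * Real.pi) := (div_lt_iff₀ hπ).1 (Int.lt_floor_add_one _)
  have hr0 : 0 ≤ r := by rw [hr]; linarith
  have hr2 : r ≤ 2 * Real.pi := by rw [hr]; nlinarith
  have hx : x = r + 2 * Real.pi * k := by rw [hr]; ring
  have hf : f.toFun x = f.toFun r + 2 * Real.pi * k := by rw [hx, periodic_int]
  have hg : g.toFun x = g.toFun r + 2 * Real.pi * k := by rw [hx, periodic_int]
  have hp := f.periodic 0
  rw [zero_add] at hp
  have hfr : f.toFun r ≤ f.toFun 0 + 2 * Real.pi := by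
    have := f.mono hr2; linarith
  have hgr : g.toFun 0 ≤ g.toFun r := g.mono hr0
  linarith

lemma Sset_nonempty (f g : CircD) : (Sset f g).Nonempty := by
  refine ⟨|f.toFun 0 - g.toFun 0| + 2 * Real.pi, ?_, fun x => ?_⟩
  · positivity
  · set C := |f.toFun 0 - g.toFun 0| + 2 * Real.pi with hC
    have hC0 : 0 ≤ C := by positivity
    have h1 := diff_bound f g x
    have h2 := diff_bound g f x
    have h3 : f.toFun 0 - g.toFun 0 ≤ |f.toFun 0 - g.toFun 0| := le_abs_self _
    have h4 : g.toFun 0 - f.toFun 0 ≤ |f.toFun 0 - g.toFun 0| := by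
      rw [abs_sub_comm]; exact le_abs_self _
    have h5 : g.toFun x ≤ g.toFun (x + C) := g.mono (by linarith)
    have h6 : f.toFun x ≤ f.toFun (x + C) := f.mono (by linarith)
    exact ⟨by linarith, by linarith⟩

lemma Sset_mem_of_le {f g : CircD} {a b : ℝ} (ha : a ∈ Sset f g) (hab : a ≤ b) :
    b ∈ Sset f g := by
  refine ⟨le_trans ha.1 hab, fun x => ?_⟩
  have h1 := (ha.2 x).1
  have h2 := (ha.2 x).2
  have h3 : g.toFun (x + a) ≤ g.toFun (x + b) := g.mono (by linarith)
  have h4 : f.toFun (x + a) ≤ f.toFun (x + b) := f.mono (by linarith)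
  exact ⟨by linarith, by linarith⟩

lemma Sset_bddBelow (f g : CircD) : BddBelow (Sset f g) := ⟨0, fun b hb => hb.1⟩

lemma dD_le {f g : CircD} {a : ℝ} (ha : a ∈ Sset f g) : dD f g ≤ a :=
  csInf_le (Sset_bddBelow f g) ha

lemma dD_nonneg (f g : CircD) : 0 ≤ dD f g :=
  le_csInf (Sset_nonempty f g) (fun b hb => hb.1)

lemma Sset_mem_of_dD_lt {f g : CircD} {ε : ℝ} (h : dD f g < ε) : ε ∈ Sset f g := by
  obtain ⟨a, ha, haε⟩ := exists_lt_of_csInf_lt (Sset_nonempty f g) h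
  exact Sset_mem_of_le ha (le_of_lt haε)

lemma Sset_symm (f g : CircD) : Sset f g = Sset g f := by
  ext ε
  exact ⟨fun ⟨h0, h⟩ => ⟨h0, fun x => ⟨(h x).2, (h x).1⟩⟩,
    fun ⟨h0, h⟩ => ⟨h0, fun x => ⟨(h x).2, (h x).1⟩⟩⟩

lemma dD_symm (f g : CircD) : dD f g = dD g f := by
  rw [dD_eq, dD_eq, Sset_symm]

lemma dD_triangle (f g h : CircD) : dD f h ≤ dD f g + dD g h := by
  have key : ∀ a ∈ Sset f g, ∀ b ∈ Sset g h, dD f h ≤ a + b := by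
    intro a ha b hb
    refine dD_le ⟨by linarith [ha.1, hb.1], fun x => ?_⟩
    have h1 := (ha.2 x).1
    have h2 := (hb.2 (x + a)).1
    have h3 := (hb.2 x).2
    have h4 := (ha.2 (x + b)).2
    have e1 : x + a + b = x + (a + b) := by ring
    have e2 : x + b + a = x + (a + b) := by ring
    rw [e1] at h2; rw [e2] at h4
    exact ⟨by linarith, by linarith⟩
  have h1 : dD f h - dD g h ≤ dD f g := by
    refine le_csInf (Sset_nonempty f g) (fun a ha => ?_)
    have h2 : dD f h - a ≤ dD g h := by
      refine le_csInf (Sset_nonempty g h) (fun b hb => ?_)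
      linarith [key a ha b hb]
    linarith
  linarith

lemma dD_self (f : CircD) : dD f f = 0 := by
  refine le_antisymm (dD_le ⟨le_refl 0, fun x => ?_⟩) (dD_nonneg f f)
  simp

lemma le_of_dD_eq_zero {f g : CircD} (h : dD f g = 0) (x : ℝ) :
    f.toFun x ≤ g.toFun x := by
  have hev : ∀ ε : ℝ, 0 < ε → f.toFun x ≤ g.toFun (x + ε) + ε := by
    intro ε hε
    have hm := Sset_mem_of_dD_lt (h ▸ hε : dD f g < ε)
    exact (hm.2 x).1
  have h1 : Tendsto (fun ε : ℝ => x + ε) (nhdsWithin 0 (Set.Ioi 0)) (nhdsWithin x (Set.Ici x)) := by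
    apply tendsto_nhdsWithin_of_tendsto_nhds_of_eventually_within
    · have : Tendsto (fun ε : ℝ => x + ε) (nhds 0) (nhds (x + 0)) :=
        (continuous_const.add continuous_id).tendsto 0
      rw [add_zero] at this
      exact this.mono_left nhdsWithin_le_nhds
    · filter_upwards [self_mem_nhdsWithin] with ε hε
      exact le_of_lt (by simpa using (lt_add_of_pos_right x hε) : x < x + ε)
  have h2 : Tendsto (fun ε : ℝ => g.toFun (x + ε)) (nhdsWithin 0 (Set.Ioi 0)) (nhds (g.toFun x)) :=
    (g.right_cont x).tendsto.comp h1
  have h3 : Tendsto (fun ε : ℝ => g.toFun (x + ε) + ε) (nhdsWithin 0 (Set.Ioi 0))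
      (nhds (g.toFun x + 0)) :=
    h2.add (tendsto_id.mono_left nhdsWithin_le_nhds)
  rw [add_zero] at h3
  refine ge_of_tendsto h3 ?_
  filter_upwards [self_mem_nhdsWithin] with ε hε
  exact hev ε hε

lemma dD_eq_zero_iff (f g : CircD) : dD f g = 0 ↔ f = g := by
  constructor
  · intro h
    refine CircD.ext' (funext fun x => le_antisymm (le_of_dD_eq_zero h x) ?_)
    exact le_of_dD_eq_zero (by rw [dD_symm]; exact h) x
  · rintro rfl; exact dD_self f

lemma dD_complete (u : ℕ → CircD)
    (hcauchy : ∀ ε : ℝ, 0 < ε → ∃ N : ℕ, ∀ m ≥ N, ∀ n ≥ N, dD (u m) (u n) < ε) :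
    ∃ l : CircD, Tendsto (fun n => dD (u n) l) atTop (nhds 0) := by
  classical
  obtain ⟨N₀, hN₀⟩ := hcauchy 1 one_pos
  -- the set of eventual upper bounds of (u n x)
  set A : ℝ → Set ℝ := fun x => {a : ℝ | ∀ᶠ n in atTop, (u n).toFun x ≤ a} with hA
  have hAne : ∀ x, ((u N₀).toFun (x + 1) + 1) ∈ A x := by
    intro x
    filter_upwards [eventually_ge_atTop N₀] with n hn
    have h1 := Sset_mem_of_dD_lt (hN₀ n hn N₀ (le_refl N₀))
    exact (h1.2 x).1
  have hAbdd : ∀ x, BddBelow (A x) := by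
    intro x
    refine ⟨(u N₀).toFun (x - 1) - 1, fun a ha => ?_⟩
    have h2 : ∀ᶠ n in atTop, (u N₀).toFun (x - 1) - 1 ≤ (u n).toFun x := by
      filter_upwards [eventually_ge_atTop N₀] with n hn
      have h1 := Sset_mem_of_dD_lt (hN₀ N₀ (le_refl N₀) n hn)
      have := (h1.2 (x - 1)).1
      rw [show x - 1 + 1 = x by ring] at this
      linarith
    obtain ⟨n, h3, h4⟩ := (h2.and ha).exists
    linarith
  set L : ℝ → ℝ := fun x => sInf (A x) with hL
  have hL_le : ∀ x c, (∀ᶠ n in atTop, (u n).toFun x ≤ c) → L x ≤ c :=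
    fun x c hc => csInf_le (hAbdd x) hc
  have hle_L : ∀ x c, (∀ᶠ n in atTop, c ≤ (u n).toFun x) → c ≤ L x := by
    intro x c hc
    refine le_csInf ⟨_, hAne x⟩ (fun a ha => ?_)
    obtain ⟨n, h1, h2⟩ := (hc.and ha).exists
    linarith
  have hLmono : Monotone L := by
    intro x y hxy
    refine csInf_le_csInf (hAbdd x) ⟨_, hAne y⟩ (fun a ha => ?_)
    filter_upwards [ha] with n hn
    exact le_trans ((u n).mono hxy) hn
  have hLper : ∀ x, L (x + 2 * Real.pi) = L x + 2 * Real.pi := by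
    intro x
    refine le_antisymm ?_ ?_
    · have h1 : L (x + 2 * Real.pi) - 2 * Real.pi ≤ L x := by
        refine le_csInf ⟨_, hAne x⟩ (fun a ha => ?_)
        have h2 : L (x + 2 * Real.pi) ≤ a + 2 * Real.pi := by
          refine hL_le _ _ ?_
          filter_upwards [ha] with n hn
          rw [(u n).periodic x]; linarith
        linarith
      linarith
    · have h1 : L x + 2 * Real.pi ≤ L (x + 2 * Real.pi) := by
        refine le_csInf ⟨_, hAne (x + 2 * Real.pi)⟩ (fun a ha => ?_)
        have h2 : L x ≤ a - 2 * Real.pi := by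
          refine hL_le _ _ ?_
          filter_upwards [ha] with n hn
          rw [(u n).periodic x] at hn; linarith
        linarith
      linarith
  -- right-continuous modification
  set l : ℝ → ℝ := fun x => sInf (L '' Set.Ioi x) with hldef
  have hlne : ∀ x : ℝ, (L '' Set.Ioi x).Nonempty :=
    fun x => ⟨L (x + 1), ⟨x + 1, by simp, rfl⟩⟩
  have hlbdd : ∀ x : ℝ, BddBelow (L '' Set.Ioi x) := by
    intro x
    refine ⟨L x, ?_⟩
    rintro b ⟨y, hy, rfl⟩
    exact hLmono (le_of_lt hy)
  have hl_le : ∀ {x y : ℝ}, x < y → l x ≤ L y :=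
    fun {x y} hy => csInf_le (hlbdd x) ⟨y, hy, rfl⟩
  have hL_le_l : ∀ x, L x ≤ l x := by
    intro x
    refine le_csInf (hlne x) ?_
    rintro b ⟨y, hy, rfl⟩
    exact hLmono (le_of_lt hy)
  have hlmono : Monotone l := by
    intro x y hxy
    refine le_csInf (hlne y) ?_
    rintro b ⟨z, hz, rfl⟩
    exact hl_le (lt_of_le_of_lt hxy hz)
  have hlper : ∀ x, l (x + 2 * Real.pi) = l x + 2 * Real.pi := by
    intro x
    refine le_antisymm ?_ ?_
    · have h1 : l (x + 2 * Real.pi) - 2 * Real.pi ≤ l x := by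
        refine le_csInf (hlne x) ?_
        rintro b ⟨y, hy, rfl⟩
        have hy' : x < y := hy
        have h2 : l (x + 2 * Real.pi) ≤ L (y + 2 * Real.pi) :=
          hl_le (by linarith)
        rw [hLper y] at h2
        linarith
      linarith
    · have h1 : l x + 2 * Real.pi ≤ l (x + 2 * Real.pi) := by
        refine le_csInf (hlne (x + 2 * Real.pi)) ?_
        rintro b ⟨y, hy, rfl⟩
        have hy' : x + 2 * Real.pi < y := hy
        have h3 : x < y - 2 * Real.pi := by linarith
        have h2 : l x ≤ L (y - 2 * Real.pi) := hl_le h3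
        have h4 := hLper (y - 2 * Real.pi)
        rw [show y - 2 * Real.pi + 2 * Real.pi = y by ring] at h4
        linarith
      linarith
  have hlcont : ∀ x : ℝ, ContinuousWithinAt l (Set.Ici x) x := by
    intro x
    show Tendsto l (nhdsWithin x (Set.Ici x)) (nhds (l x))
    rw [tendsto_order]
    constructor
    · intro a ha
      filter_upwards [self_mem_nhdsWithin] with y hy
      exact lt_of_lt_of_le ha (hlmono hy)
    · intro a ha
      obtain ⟨b, ⟨y, hy, rfl⟩, hba⟩ := exists_lt_of_csInf_lt (hlne x) ha
      have hmem : Set.Ico x y ∈ nhdsWithin x (Set.Ici x) :=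
        Ico_mem_nhdsGE_of_mem ⟨le_refl x, hy⟩
      filter_upwards [hmem] with z hz
      exact lt_of_le_of_lt (hl_le hz.2) hba
  refine ⟨⟨l, hlmono, hlcont, hlper⟩, ?_⟩
  rw [Metric.tendsto_atTop]
  intro ε hε
  obtain ⟨N, hN⟩ := hcauchy (ε / 3) (by linarith)
  refine ⟨N, fun n hn => ?_⟩
  set ε' := ε / 3 with hε'
  have hε'0 : 0 < ε' := by rw [hε']; linarith
  have hmem : 2 * ε' ∈ Sset (u n) ⟨l, hlmono, hlcont, hlper⟩ := by
    refine ⟨by linarith, fun x => ?_⟩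
    constructor
    · -- u n x ≤ l (x + 2ε') + 2ε'
      show (u n).toFun x ≤ l (x + 2 * ε') + 2 * ε'
      have h1 : (u n).toFun x - ε' ≤ L (x + ε') := by
        refine hle_L _ _ ?_
        filter_upwards [eventually_ge_atTop N] with m hm
        have h2 := Sset_mem_of_dD_lt (hN n hn m hm)
        linarith [(h2.2 x).1]
      have h3 : L (x + ε') ≤ l (x + ε') := hL_le_l _
      have h4 : l (x + ε') ≤ l (x + 2 * ε') := hlmono (by linarith)
      linarith
    · -- l x ≤ u n (x + 2ε') + 2ε'
      show l x ≤ (u n).toFun (x + 2 * ε') + 2 * ε'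
      have h1 : l x ≤ L (x + ε') := hl_le (by linarith)
      have h2 : L (x + ε') ≤ (u n).toFun (x + ε' + ε') + ε' := by
        refine hL_le _ _ ?_
        filter_upwards [eventually_ge_atTop N] with m hm
        have h3 := Sset_mem_of_dD_lt (hN m hm n hn)
        exact (h3.2 (x + ε')).1
      rw [show x + ε' + ε' = x + 2 * ε' by ring] at h2
      linarith
  have h5 := dD_le hmem
  have h6 := dD_nonneg (u n) ⟨l, hlmono, hlcont, hlper⟩
  rw [Real.dist_eq, sub_zero, abs_of_nonneg h6]
  linarith

/-- `(𝒟, d_𝒟)` is a complete metric space. -/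
theorem stmt19 :
    (∀ f g : CircD, 0 ≤ dD f g) ∧
    (∀ f g : CircD, dD f g = 0 ↔ f = g) ∧
    (∀ f g : CircD, dD f g = dD g f) ∧
    (∀ f g h : CircD, dD f h ≤ dD f g + dD g h) ∧
    (∀ u : ℕ → CircD,
      (∀ ε : ℝ, 0 < ε → ∃ N : ℕ, ∀ m ≥ N, ∀ n ≥ N, dD (u m) (u n) < ε) →
      ∃ l : CircD, Tendsto (fun n => dD (u n) l) atTop (nhds 0)) := by
  exact ⟨dD_nonneg, dD_eq_zero_iff, dD_symm, dD_triangle, dD_complete⟩
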